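/- In ℂ⁶, let {e_k}_{k=0}^{5} be the standard basis, set e^0_j = e_j for j = 0,…,5, and for each a = 1,…,7 define e^a_j = (1/√6) ∑_{k=0}^{5} exp(2πi·jk/6)·exp(2πi·a·3^k/7) e_k. Then: (i) for each a = 0,…,7, the set {e^a_j}_{j=0}^{5} is an orthonormal basis of ℂ⁶; and (ii) with weights w_0 = 1/42 and w_a = 1/49 for a = 1,…,7, the union of these 8 bases forms a weighted 2-design: ∑_{a,b=0}^{7} w_a w_b ∑_{j,k=0}^{5} |⟨e^a_j, e^b_k⟩|^4 = 1/21. -/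

import Mathlib

open Complex

/-- The 8 bases of `ℂ⁶`: the standard basis (`a = 0`) together with the 7 bases
`e^a_j = (1/√6) ∑_k exp(2πi·jk/6)·exp(2πi·a·3^k/7) e_k` for `a = 1, …, 7`. -/
noncomputable def dim6Basis : Fin 8 → Fin 6 → EuclideanSpace ℂ (Fin 6) := fun a j =>
  if a = 0 then EuclideanSpace.single j 1
  else
    (WithLp.equiv 2 (Fin 6 → ℂ)).symm fun k =>
      ((Real.sqrt 6 : ℂ))⁻¹ *
        Complex.exp (2 * Real.pi * Complex.I * (j : ℕ) * (k : ℕ) / 6) *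
        Complex.exp (2 * Real.pi * Complex.I * (a : ℕ) * ((3 : ℕ) ^ (k : ℕ) : ℕ) / 7)

/-- The weights: `1/42` for the standard basis, `1/49` for each of the other 7 bases. -/
noncomputable def dim6Weight : Fin 8 → ℝ := fun a => if a = 0 then 1 / 42 else 1 / 49

namespace Dim6Aux

noncomputable def z6 : ℂ := Complex.exp (2 * Real.pi * Complex.I / 6)
noncomputable def z7 : ℂ := Complex.exp (2 * Real.pi * Complex.I / 7)

lemma prim6 : IsPrimitiveRoot z6 6 := by
  have := Complex.isPrimitiveRoot_exp 6 (by norm_num)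
  simpa [z6] using this

lemma prim7 : IsPrimitiveRoot z7 7 := by
  have := Complex.isPrimitiveRoot_exp 7 (by norm_num)
  simpa [z7] using this

lemma z6_pow_six : z6 ^ 6 = 1 := prim6.pow_eq_one
lemma z7_pow_seven : z7 ^ 7 = 1 := prim7.pow_eq_one

lemma z6_pow_mod (n : ℕ) : z6 ^ n = z6 ^ (n % 6) := by
  conv_lhs => rw [← Nat.div_add_mod n 6]
  rw [pow_add, pow_mul, z6_pow_six, one_pow, one_mul]

lemma z7_pow_mod (n : ℕ) : z7 ^ n = z7 ^ (n % 7) := by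
  conv_lhs => rw [← Nat.div_add_mod n 7]
  rw [pow_add, pow_mul, z7_pow_seven, one_pow, one_mul]

lemma z6_congr {n m : ℕ} (h : n % 6 = m % 6) : z6 ^ n = z6 ^ m := by
  rw [z6_pow_mod n, z6_pow_mod m, h]

lemma z7_congr {n m : ℕ} (h : n % 7 = m % 7) : z7 ^ n = z7 ^ m := by
  rw [z7_pow_mod n, z7_pow_mod m, h]

lemma sum6 (m : ℕ) (hm : ¬ (6 ∣ m)) : ∑ k : Fin 6, z6 ^ (m * (k : ℕ)) = 0 := by
  have hne : z6 ^ m ≠ 1 := fun h => hm ((prim6.pow_eq_one_iff_dvd m).mp h)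
  have h6 : (z6 ^ m) ^ 6 = 1 := by rw [← pow_mul, mul_comm, pow_mul, z6_pow_six, one_pow]
  calc ∑ k : Fin 6, z6 ^ (m * (k : ℕ)) = ∑ k : Fin 6, (z6 ^ m) ^ (k : ℕ) := by
        simp_rw [pow_mul]
    _ = ∑ k ∈ Finset.range 6, (z6 ^ m) ^ k := Fin.sum_univ_eq_sum_range _ 6
    _ = 0 := by rw [geom_sum_eq hne, h6]; simp

lemma sum7 (c : ℕ) (hc : ¬ (7 ∣ c)) : ∑ t : Fin 7, z7 ^ (c * (t : ℕ)) = 0 := by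
  have hne : z7 ^ c ≠ 1 := fun h => hc ((prim7.pow_eq_one_iff_dvd c).mp h)
  have h7 : (z7 ^ c) ^ 7 = 1 := by rw [← pow_mul, mul_comm, pow_mul, z7_pow_seven, one_pow]
  calc ∑ t : Fin 7, z7 ^ (c * (t : ℕ)) = ∑ t : Fin 7, (z7 ^ c) ^ (t : ℕ) := by
        simp_rw [pow_mul]
    _ = ∑ t ∈ Finset.range 7, (z7 ^ c) ^ t := Fin.sum_univ_eq_sum_range _ 7
    _ = 0 := by rw [geom_sum_eq hne, h7]; simp

lemma gauss_alg (X Y : ℂ) (hX6 : X^6 = 1) (hY7 : Y^7 = 1)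
    (hXs : X^5+X^4+X^3+X^2+X+1 = 0) (hYs : Y^6+Y^5+Y^4+Y^3+Y^2+Y+1 = 0) :
    (Y + X*Y^3 + X^2*Y^2 + X^3*Y^6 + X^4*Y^4 + X^5*Y^5) *
    (Y^6 + X^5*Y^4 + X^4*Y^5 + X^3*Y + X^2*Y^3 + X*Y^2) = 7 := by
  linear_combination (5*Y^7 + X*Y^5 + X*Y^6 + X*Y^8 + X*Y^11 + X^2*Y^6 + X^2*Y^9 +
      X^2*Y^10 + X^3*Y^8 + X^3*Y^10 + X^4*Y^9) * hX6 +
    (6 + X*Y + X*Y^2 + X*Y^4 + X^2*Y + X^2*Y^2 + X^2*Y^3 + X^3*Y + X^3*Y^3 + X^3*Y^5 +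
      X^4*Y + X^4*Y^2 + X^4*Y^3 + X^5*Y + X^5*Y^2 + X^5*Y^4) * hY7 +
    (Y^6+Y^5+Y^4+Y^3+Y^2+Y) * hXs - hYs

lemma sum6' (m : ℕ) (hm : ¬ (6 ∣ m)) :
    (z6^m)^5+(z6^m)^4+(z6^m)^3+(z6^m)^2+z6^m+1 = 0 := by
  have h := sum6 m hm
  rw [Fin.sum_univ_eq_sum_range (fun k => z6^(m*k)) 6] at h
  simp only [Finset.sum_range_succ, Finset.sum_range_zero, pow_mul] at h
  linear_combination h

lemma sum7' (c : ℕ) (hc : ¬ (7 ∣ c)) :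
    (z7^c)^6+(z7^c)^5+(z7^c)^4+(z7^c)^3+(z7^c)^2+z7^c+1 = 0 := by
  have h := sum7 c hc
  rw [Fin.sum_univ_eq_sum_range (fun t => z7^(c*t)) 7] at h
  simp only [Finset.sum_range_succ, Finset.sum_range_zero, pow_mul] at h
  linear_combination h

lemma gsum1 (m c : ℕ) :
    (∑ l : Fin 6, z6^(m*(l:ℕ)) * z7^(c*3^(l:ℕ))) =
      (z7^c) + (z6^m)*(z7^c)^3 + (z6^m)^2*(z7^c)^2 + (z6^m)^3*(z7^c)^6
        + (z6^m)^4*(z7^c)^4 + (z6^m)^5*(z7^c)^5 := by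
  rw [Fin.sum_univ_eq_sum_range (fun l => z6^(m*l) * z7^(c*3^l)) 6]
  simp only [Finset.sum_range_succ, Finset.sum_range_zero, zero_add]
  have h9 : z7^(c*3^2) = (z7^c)^2 := by
    rw [z7_congr (show (c*3^2)%7 = (c*2)%7 by omega), pow_mul]
  have h27 : z7^(c*3^3) = (z7^c)^6 := by
    rw [z7_congr (show (c*3^3)%7 = (c*6)%7 by omega), pow_mul]
  have h81 : z7^(c*3^4) = (z7^c)^4 := by
    rw [z7_congr (show (c*3^4)%7 = (c*4)%7 by omega), pow_mul]
  have h243 : z7^(c*3^5) = (z7^c)^5 := by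
    rw [z7_congr (show (c*3^5)%7 = (c*5)%7 by omega), pow_mul]
  rw [h9, h27, h81, h243]
  norm_num [pow_mul]

lemma gsum2 (m c : ℕ) :
    (∑ l : Fin 6, z6^(5*(m*(l:ℕ))) * z7^(6*(c*3^(l:ℕ)))) =
      (z7^c)^6 + (z6^m)^5*(z7^c)^4 + (z6^m)^4*(z7^c)^5 + (z6^m)^3*(z7^c)
        + (z6^m)^2*(z7^c)^3 + (z6^m)*(z7^c)^2 := by
  rw [Fin.sum_univ_eq_sum_range (fun l => z6^(5*(m*l)) * z7^(6*(c*3^l))) 6]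
  simp only [Finset.sum_range_succ, Finset.sum_range_zero, zero_add]
  have a1 : z6^(5*(m*1)) = (z6^m)^5 := by
    rw [z6_congr (show (5*(m*1))%6 = (m*5)%6 by omega), pow_mul]
  have a2 : z6^(5*(m*2)) = (z6^m)^4 := by
    rw [z6_congr (show (5*(m*2))%6 = (m*4)%6 by omega), pow_mul]
  have a3 : z6^(5*(m*3)) = (z6^m)^3 := by
    rw [z6_congr (show (5*(m*3))%6 = (m*3)%6 by omega), pow_mul]
  have a4 : z6^(5*(m*4)) = (z6^m)^2 := by
    rw [z6_congr (show (5*(m*4))%6 = (m*2)%6 by omega), pow_mul]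
  have a5 : z6^(5*(m*5)) = (z6^m)^1 := by
    rw [z6_congr (show (5*(m*5))%6 = (m*1)%6 by omega), pow_mul]
  have b0 : z7^(6*(c*3^0)) = (z7^c)^6 := by
    rw [z7_congr (show (6*(c*3^0))%7 = (c*6)%7 by omega), pow_mul]
  have b1 : z7^(6*(c*3^1)) = (z7^c)^4 := by
    rw [z7_congr (show (6*(c*3^1))%7 = (c*4)%7 by omega), pow_mul]
  have b2 : z7^(6*(c*3^2)) = (z7^c)^5 := by
    rw [z7_congr (show (6*(c*3^2))%7 = (c*5)%7 by omega), pow_mul]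
  have b3 : z7^(6*(c*3^3)) = (z7^c)^1 := by
    rw [z7_congr (show (6*(c*3^3))%7 = (c*1)%7 by omega), pow_mul]
  have b4 : z7^(6*(c*3^4)) = (z7^c)^3 := by
    rw [z7_congr (show (6*(c*3^4))%7 = (c*3)%7 by omega), pow_mul]
  have b5 : z7^(6*(c*3^5)) = (z7^c)^2 := by
    rw [z7_congr (show (6*(c*3^5))%7 = (c*2)%7 by omega), pow_mul]
  rw [a1, a2, a3, a4, a5, b0, b1, b2, b3, b4, b5]
  norm_num

lemma gauss (m c : ℕ) (hm : ¬ (6 ∣ m)) (hc : ¬ (7 ∣ c)) :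
    (∑ l : Fin 6, z6^(m*(l:ℕ)) * z7^(c*3^(l:ℕ))) *
    (∑ l : Fin 6, z6^(5*(m*(l:ℕ))) * z7^(6*(c*3^(l:ℕ)))) = 7 := by
  rw [gsum1, gsum2]
  have hX6 : (z6^m)^6 = 1 := by rw [← pow_mul, mul_comm, pow_mul, z6_pow_six, one_pow]
  have hY7 : (z7^c)^7 = 1 := by rw [← pow_mul, mul_comm, pow_mul, z7_pow_seven, one_pow]
  exact gauss_alg (z6^m) (z7^c) hX6 hY7 (sum6' m hm) (sum7' c hc)

lemma sum_pow3 (c : ℕ) (hc : ¬ (7 ∣ c)) :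
    (∑ l : Fin 6, z7^(c*3^(l:ℕ))) = -1 := by
  have h := gsum1 0 c
  simp only [zero_mul, pow_zero, one_pow, one_mul] at h
  rw [h]
  linear_combination sum7' c hc

lemma conj_z6 : (starRingEnd ℂ) z6 = z6 ^ 5 := by
  have h : (starRingEnd ℂ) z6 * z6 = 1 := by
    rw [z6, ← Complex.exp_conj, ← Complex.exp_add]
    have e : (starRingEnd ℂ) (2*(Real.pi:ℂ)*Complex.I/6) + 2*(Real.pi:ℂ)*Complex.I/6 = 0 := by
      simp [map_div₀, map_mul, map_ofNat, Complex.conj_I, Complex.conj_ofReal]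
      ring
    rw [e, Complex.exp_zero]
  have h6 : z6 * z6 ^ 5 = 1 := by rw [← pow_succ']; exact z6_pow_six
  calc (starRingEnd ℂ) z6 = (starRingEnd ℂ) z6 * (z6 * z6^5) := by rw [h6, mul_one]
    _ = ((starRingEnd ℂ) z6 * z6) * z6^5 := by ring
    _ = z6^5 := by rw [h, one_mul]

lemma conj_z7 : (starRingEnd ℂ) z7 = z7 ^ 6 := by
  have h : (starRingEnd ℂ) z7 * z7 = 1 := by
    rw [z7, ← Complex.exp_conj, ← Complex.exp_add]
    have e : (starRingEnd ℂ) (2*(Real.pi:ℂ)*Complex.I/7) + 2*(Real.pi:ℂ)*Complex.I/7 = 0 := by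
      simp [map_div₀, map_mul, map_ofNat, Complex.conj_I, Complex.conj_ofReal]
      ring
    rw [e, Complex.exp_zero]
  have h7 : z7 * z7 ^ 6 = 1 := by rw [← pow_succ']; exact z7_pow_seven
  calc (starRingEnd ℂ) z7 = (starRingEnd ℂ) z7 * (z7 * z7^6) := by rw [h7, mul_one]
    _ = ((starRingEnd ℂ) z7 * z7) * z7^6 := by ring
    _ = z7^6 := by rw [h, one_mul]

lemma conj_z6_pow (n : ℕ) : (starRingEnd ℂ) (z6 ^ n) = z6 ^ (5 * n) := by
  rw [map_pow, conj_z6, ← pow_mul]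

lemma conj_z7_pow (n : ℕ) : (starRingEnd ℂ) (z7 ^ n) = z7 ^ (6 * n) := by
  rw [map_pow, conj_z7, ← pow_mul]

lemma basis_apply {a : Fin 8} (ha : a ≠ 0) (j k : Fin 6) :
    dim6Basis a j k = ((Real.sqrt 6 : ℝ) : ℂ)⁻¹ * z6 ^ ((j:ℕ)*(k:ℕ)) * z7 ^ ((a:ℕ)*3^(k:ℕ)) := by
  simp only [dim6Basis, if_neg ha, WithLp.equiv_symm_apply, PiLp.toLp_apply]
  congr 2
  · rw [z6, ← Complex.exp_nat_mul]
    congr 1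
    push_cast
    ring
  · rw [z7, ← Complex.exp_nat_mul]
    congr 1
    push_cast
    ring

lemma inner_apply' (x y : EuclideanSpace ℂ (Fin 6)) :
    (inner ℂ x y : ℂ) = ∑ l : Fin 6, (starRingEnd ℂ) (x l) * y l := by
  rw [PiLp.inner_apply]; simp [RCLike.inner_apply, mul_comm]

lemma sqrt6_sq : ((Real.sqrt 6 : ℝ) : ℂ)⁻¹ * ((Real.sqrt 6 : ℝ) : ℂ)⁻¹ = (6:ℂ)⁻¹ := by
  rw [← mul_inv, ← Complex.ofReal_mul, Real.mul_self_sqrt (by norm_num)]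
  norm_num

lemma inner_ab {a b : Fin 8} (ha : a ≠ 0) (hb : b ≠ 0) (j k : Fin 6) :
    (inner ℂ (dim6Basis a j) (dim6Basis b k) : ℂ) =
      (6:ℂ)⁻¹ * ∑ l : Fin 6,
        z6 ^ ((5*(j:ℕ)+(k:ℕ))*(l:ℕ)) * z7 ^ ((6*(a:ℕ)+(b:ℕ))*3^(l:ℕ)) := by
  rw [inner_apply', Finset.mul_sum]
  refine Finset.sum_congr rfl fun l _ => ?_
  rw [basis_apply ha, basis_apply hb, map_mul, map_mul, map_inv₀, Complex.conj_ofReal,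
    conj_z6_pow, conj_z7_pow]
  have e1 : z6^(5*((j:ℕ)*(l:ℕ))) * z6^((k:ℕ)*(l:ℕ)) = z6^((5*(j:ℕ)+(k:ℕ))*(l:ℕ)) := by
    rw [← pow_add]; congr 1; ring
  have e2 : z7^(6*((a:ℕ)*3^(l:ℕ))) * z7^((b:ℕ)*3^(l:ℕ)) = z7^((6*(a:ℕ)+(b:ℕ))*3^(l:ℕ)) := by
    rw [← pow_add]; congr 1; ring
  calc ((Real.sqrt 6 : ℝ) : ℂ)⁻¹ * z6^(5*((j:ℕ)*(l:ℕ))) * z7^(6*((a:ℕ)*3^(l:ℕ))) *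
        (((Real.sqrt 6 : ℝ) : ℂ)⁻¹ * z6^((k:ℕ)*(l:ℕ)) * z7^((b:ℕ)*3^(l:ℕ)))
      = (((Real.sqrt 6 : ℝ) : ℂ)⁻¹ * ((Real.sqrt 6 : ℝ) : ℂ)⁻¹) *
        ((z6^(5*((j:ℕ)*(l:ℕ))) * z6^((k:ℕ)*(l:ℕ))) *
         (z7^(6*((a:ℕ)*3^(l:ℕ))) * z7^((b:ℕ)*3^(l:ℕ)))) := by ring
    _ = (6:ℂ)⁻¹ * (z6 ^ ((5*(j:ℕ)+(k:ℕ))*(l:ℕ)) * z7 ^ ((6*(a:ℕ)+(b:ℕ))*3^(l:ℕ))) := by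
        rw [sqrt6_sq, e1, e2]

lemma z7_same {a : Fin 8} (l : Fin 6) :
    z7 ^ ((6*(a:ℕ)+(a:ℕ))*3^(l:ℕ)) = 1 := by
  rw [show (6*(a:ℕ)+(a:ℕ))*3^(l:ℕ) = 7*((a:ℕ)*3^(l:ℕ)) by ring, pow_mul, z7_pow_seven, one_pow]

lemma inner_same {a : Fin 8} (ha : a ≠ 0) (j k : Fin 6) :
    (inner ℂ (dim6Basis a j) (dim6Basis a k) : ℂ) = if j = k then 1 else 0 := by
  rw [inner_ab ha ha]
  rcases eq_or_ne j k with rfl | hjk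
  · rw [if_pos rfl]
    have h1 : ∀ l : Fin 6, z6 ^ ((5*(j:ℕ)+(j:ℕ))*(l:ℕ)) * z7 ^ ((6*(a:ℕ)+(a:ℕ))*3^(l:ℕ)) = 1 := by
      intro l
      rw [z7_same, mul_one, show (5*(j:ℕ)+(j:ℕ))*(l:ℕ) = 6*((j:ℕ)*(l:ℕ)) by ring,
        pow_mul, z6_pow_six, one_pow]
    rw [Finset.sum_congr rfl fun l _ => h1 l]
    norm_num
  · rw [if_neg hjk]
    have hm : ¬ (6 ∣ 5*(j:ℕ)+(k:ℕ)) := by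
      have hj := j.isLt
      have hk := k.isLt
      have : (j:ℕ) ≠ (k:ℕ) := fun h => hjk (Fin.ext h)
      omega
    rw [Finset.sum_congr rfl fun l _ => by rw [z7_same (a := a) l, mul_one]]
    rw [sum6 _ hm, mul_zero]

lemma ortho (a : Fin 8) : Orthonormal ℂ (dim6Basis a) := by
  rw [orthonormal_iff_ite]
  intro j k
  by_cases ha : a = 0
  · subst ha
    have hb : ∀ j : Fin 6, dim6Basis 0 j = EuclideanSpace.single j 1 := fun j => by
      simp [dim6Basis]
    rw [hb, hb, EuclideanSpace.inner_single_left]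
    simp [EuclideanSpace.single_apply, eq_comm]
  · exact inner_same ha j k

lemma norm4_mul_conj {z : ℂ} {r : ℝ} (h : z * (starRingEnd ℂ) z = (r : ℂ)) :
    ‖z‖ ^ 4 = r ^ 2 := by
  have h2 : Complex.normSq z = r := by
    have hc := Complex.mul_conj z
    rw [h] at hc
    exact_mod_cast hc.symm
  calc ‖z‖^4 = (‖z‖ ^ 2) ^ 2 := by ring
    _ = r ^ 2 := by rw [Complex.sq_norm, h2]

lemma unit_mul_conj (p q : ℕ) :
    (((Real.sqrt 6 : ℝ) : ℂ)⁻¹ * z6 ^ p * z7 ^ q) *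
      (starRingEnd ℂ) (((Real.sqrt 6 : ℝ) : ℂ)⁻¹ * z6 ^ p * z7 ^ q) = (((1:ℝ)/6 : ℝ) : ℂ) := by
  rw [map_mul, map_mul, map_inv₀, Complex.conj_ofReal, conj_z6_pow, conj_z7_pow]
  have e1 : z6^p * z6^(5*p) = 1 := by
    rw [← pow_add, show p + 5*p = 6*p by ring, pow_mul, z6_pow_six, one_pow]
  have e2 : z7^q * z7^(6*q) = 1 := by
    rw [← pow_add, show q + 6*q = 7*q by ring, pow_mul, z7_pow_seven, one_pow]
  calc ((Real.sqrt 6 : ℝ) : ℂ)⁻¹ * z6 ^ p * z7 ^ q *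
        (((Real.sqrt 6 : ℝ) : ℂ)⁻¹ * z6 ^ (5*p) * z7 ^ (6*q))
      = (((Real.sqrt 6 : ℝ) : ℂ)⁻¹ * ((Real.sqrt 6 : ℝ) : ℂ)⁻¹) *
        ((z6^p * z6^(5*p)) * (z7^q * z7^(6*q))) := by ring
    _ = (((1:ℝ)/6 : ℝ) : ℂ) := by rw [sqrt6_sq, e1, e2]; norm_num

lemma norm4_cross_left {b : Fin 8} (hb : b ≠ 0) (j k : Fin 6) :
    ‖(inner ℂ (dim6Basis 0 j) (dim6Basis b k) : ℂ)‖ ^ 4 = 1/36 := by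
  have h : (inner ℂ (dim6Basis 0 j) (dim6Basis b k) : ℂ) = dim6Basis b k j := by
    have : dim6Basis 0 j = EuclideanSpace.single j 1 := by simp [dim6Basis]
    rw [this, EuclideanSpace.inner_single_left, map_one, one_mul]
  rw [h, basis_apply hb]
  rw [norm4_mul_conj (unit_mul_conj _ _)]
  norm_num

lemma norm4_cross_right {a : Fin 8} (ha : a ≠ 0) (j k : Fin 6) :
    ‖(inner ℂ (dim6Basis a j) (dim6Basis 0 k) : ℂ)‖ ^ 4 = 1/36 := by
  have h : (inner ℂ (dim6Basis a j) (dim6Basis 0 k) : ℂ)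
      = (starRingEnd ℂ) (dim6Basis a j k) := by
    have : dim6Basis 0 k = EuclideanSpace.single k 1 := by simp [dim6Basis]
    rw [this, EuclideanSpace.inner_single_right, one_mul]
  rw [h, RCLike.norm_conj, basis_apply ha]
  rw [norm4_mul_conj (unit_mul_conj _ _)]
  norm_num

lemma norm4_ab {a b : Fin 8} (ha : a ≠ 0) (hb : b ≠ 0) (hab : a ≠ b) (j k : Fin 6) :
    ‖(inner ℂ (dim6Basis a j) (dim6Basis b k) : ℂ)‖ ^ 4 =
      if j = k then 1/1296 else 49/1296 := by
  have hc : ¬ (7 ∣ 6*(a:ℕ)+(b:ℕ)) := by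
    have ha' : (a:ℕ) ≠ 0 := fun h => ha (Fin.ext h)
    have hb' : (b:ℕ) ≠ 0 := fun h => hb (Fin.ext h)
    have hab' : (a:ℕ) ≠ (b:ℕ) := fun h => hab (Fin.ext h)
    have := a.isLt
    have := b.isLt
    omega
  rcases eq_or_ne j k with rfl | hjk
  · rw [if_pos rfl, inner_ab ha hb]
    have h1 : ∀ l : Fin 6, z6 ^ ((5*(j:ℕ)+(j:ℕ))*(l:ℕ)) * z7 ^ ((6*(a:ℕ)+(b:ℕ))*3^(l:ℕ))
        = z7 ^ ((6*(a:ℕ)+(b:ℕ))*3^(l:ℕ)) := by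
      intro l
      rw [show (5*(j:ℕ)+(j:ℕ))*(l:ℕ) = 6*((j:ℕ)*(l:ℕ)) by ring, pow_mul, z6_pow_six,
        one_pow, one_mul]
    rw [Finset.sum_congr rfl fun l _ => h1 l]
    have h2 : (∑ l : Fin 6, z7 ^ ((6*(a:ℕ)+(b:ℕ))*3^(l:ℕ))) = -1 := sum_pow3 _ hc
    rw [h2]
    have : ((6:ℂ)⁻¹ * (-1)) = (((-1)/6 : ℝ) : ℂ) := by push_cast; ring
    rw [this]
    have hz : ((((-1)/6 : ℝ)) : ℂ) * (starRingEnd ℂ) ((((-1)/6 : ℝ)) : ℂ)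
        = (((1:ℝ)/36 : ℝ) : ℂ) := by
      rw [Complex.conj_ofReal, ← Complex.ofReal_mul]
      norm_num
    rw [norm4_mul_conj hz]
    norm_num
  · rw [if_neg hjk, inner_ab ha hb]
    have hm : ¬ (6 ∣ 5*(j:ℕ)+(k:ℕ)) := by
      have hj := j.isLt
      have hk := k.isLt
      have : (j:ℕ) ≠ (k:ℕ) := fun h => hjk (Fin.ext h)
      omega
    have hconj : (starRingEnd ℂ) ((6:ℂ)⁻¹ * ∑ l : Fin 6,
          z6 ^ ((5*(j:ℕ)+(k:ℕ))*(l:ℕ)) * z7 ^ ((6*(a:ℕ)+(b:ℕ))*3^(l:ℕ)))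
        = (6:ℂ)⁻¹ * ∑ l : Fin 6,
          z6 ^ (5*((5*(j:ℕ)+(k:ℕ))*(l:ℕ))) * z7 ^ (6*((6*(a:ℕ)+(b:ℕ))*3^(l:ℕ))) := by
      rw [map_mul, map_inv₀, map_sum, map_ofNat]
      congr 1
      refine Finset.sum_congr rfl fun l _ => ?_
      rw [map_mul, conj_z6_pow, conj_z7_pow]
    have hz : ((6:ℂ)⁻¹ * ∑ l : Fin 6,
          z6 ^ ((5*(j:ℕ)+(k:ℕ))*(l:ℕ)) * z7 ^ ((6*(a:ℕ)+(b:ℕ))*3^(l:ℕ))) *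
        (starRingEnd ℂ) ((6:ℂ)⁻¹ * ∑ l : Fin 6,
          z6 ^ ((5*(j:ℕ)+(k:ℕ))*(l:ℕ)) * z7 ^ ((6*(a:ℕ)+(b:ℕ))*3^(l:ℕ)))
        = (((7:ℝ)/36 : ℝ) : ℂ) := by
      rw [hconj]
      calc ((6:ℂ)⁻¹ * ∑ l : Fin 6,
              z6 ^ ((5*(j:ℕ)+(k:ℕ))*(l:ℕ)) * z7 ^ ((6*(a:ℕ)+(b:ℕ))*3^(l:ℕ))) *
            ((6:ℂ)⁻¹ * ∑ l : Fin 6,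
              z6 ^ (5*((5*(j:ℕ)+(k:ℕ))*(l:ℕ))) * z7 ^ (6*((6*(a:ℕ)+(b:ℕ))*3^(l:ℕ))))
          = ((6:ℂ)⁻¹ * (6:ℂ)⁻¹) *
            ((∑ l : Fin 6, z6 ^ ((5*(j:ℕ)+(k:ℕ))*(l:ℕ)) * z7 ^ ((6*(a:ℕ)+(b:ℕ))*3^(l:ℕ))) *
             (∑ l : Fin 6, z6 ^ (5*((5*(j:ℕ)+(k:ℕ))*(l:ℕ))) *
                z7 ^ (6*((6*(a:ℕ)+(b:ℕ))*3^(l:ℕ))))) := by ring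
        _ = (((7:ℝ)/36 : ℝ) : ℂ) := by
            rw [gauss _ _ hm hc]
            push_cast
            norm_num
    rw [norm4_mul_conj hz]
    norm_num

lemma sum_ite6 (u v : ℝ) :
    ∑ j : Fin 6, ∑ k : Fin 6, (if j = k then u else v) = 6*u + 30*v := by
  simp [Fin.sum_univ_six]
  ring

lemma sum_norm4 (a b : Fin 8) :
    ∑ j : Fin 6, ∑ k : Fin 6, ‖(inner ℂ (dim6Basis a j) (dim6Basis b k) : ℂ)‖ ^ 4 =
      if a = 0 then (if b = 0 then 6 else 1)
      else if b = 0 then 1 else if a = b then 6 else 41/36 := by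
  by_cases ha : a = 0
  · subst ha
    by_cases hb : b = 0
    · subst hb
      rw [if_pos rfl, if_pos rfl]
      have h : ∀ j k : Fin 6, ‖(inner ℂ (dim6Basis 0 j) (dim6Basis 0 k) : ℂ)‖ ^ 4
          = if j = k then (1:ℝ) else 0 := by
        intro j k
        rw [(orthonormal_iff_ite.mp (ortho 0)) j k]
        rcases eq_or_ne j k with rfl | h
        · simp
        · simp [h]
      simp_rw [h]
      rw [sum_ite6]
      norm_num
    · rw [if_pos rfl, if_neg hb]
      simp_rw [norm4_cross_left hb]
      norm_num
  · by_cases hb : b = 0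
    · subst hb
      rw [if_neg ha, if_pos rfl]
      simp_rw [norm4_cross_right ha]
      norm_num
    · by_cases hab : a = b
      · subst hab
        rw [if_neg ha, if_neg ha, if_pos rfl]
        have h : ∀ j k : Fin 6, ‖(inner ℂ (dim6Basis a j) (dim6Basis a k) : ℂ)‖ ^ 4
            = if j = k then (1:ℝ) else 0 := by
          intro j k
          rw [(orthonormal_iff_ite.mp (ortho a)) j k]
          rcases eq_or_ne j k with rfl | h
          · simp
          · simp [h]
        simp_rw [h]
        rw [sum_ite6]
        norm_num
      · rw [if_neg ha, if_neg hb, if_neg hab]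
        simp_rw [norm4_ab ha hb hab]
        rw [sum_ite6]
        norm_num

end Dim6Aux

/-- **A weighted 2-design in `ℂ⁶` from 8 orthonormal bases.** (i) Each of the 8 families
`dim6Basis a` is an orthonormal basis of `ℂ⁶`; (ii) with weights `1/42` and `1/49` their
union forms a weighted 2-design: the Welch sum equals `1/21 = 2/(6·7)`. -/
theorem dim6_weighted_two_design :
    (∀ a : Fin 8, Orthonormal ℂ (dim6Basis a)) ∧
    ∑ a : Fin 8, ∑ b : Fin 8, dim6Weight a * dim6Weight b *
        ∑ j : Fin 6, ∑ k : Fin 6, ‖(inner ℂ (dim6Basis a j) (dim6Basis b k) : ℂ)‖ ^ 4 =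
      1 / 21 := by
  refine ⟨Dim6Aux.ortho, ?_⟩
  simp only [Dim6Aux.sum_norm4, dim6Weight]
  simp only [Fin.sum_univ_eight, Fin.reduceEq, reduceIte]
  norm_num
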